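/- Nonholonomic Noether theorem: Let L : ℝⁿ × ℝⁿ → ℝ be a C² Lagrangian, let H assign to each point q ∈ ℝⁿ a linear subspace H(q) ⊆ ℝⁿ (the constraint distribution), and let q : ℝ → ℝⁿ be a C² curve satisfying the Lagrange–d'Alembert conditions: q̇(t) ∈ H(q(t)) for all t, and the Euler–Lagrange covector (d/dt)[D₂L(q(t), q̇(t))] − D₁L(q(t), q̇(t)) annihilates H(q(t)) for all t. Suppose ξ : ℝⁿ → ℝⁿ is a C¹ vector field with a global flow φ : ℝ × ℝⁿ → ℝⁿ (i.e. ∂φ/∂s (s,x) = ξ(φ(s,x)), φ(0,x) = x, with φ C¹ in (s,x) and differentiable in x) such that L(φ(s,x), D_xφ(s,x)·v) = L(x,v) for all s ∈ ℝ, x,v ∈ ℝⁿ, and such that ξ(x) ∈ H(x) for all x. Then the function t ↦ D₂L(q(t), q̇(t))·ξ(q(t)) is constant. -/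

import Mathlib

open intervalIntegral MeasureTheory Metric Set

section helpers

variable {E F G : Type*} [NormedAddCommGroup E] [NormedSpace ℝ E]
    [NormedAddCommGroup F] [NormedSpace ℝ F] [NormedAddCommGroup G] [NormedSpace ℝ G]

lemma partial_fst {f : E × F → G} {x : E} {v : F} (hf : DifferentiableAt ℝ f (x, v)) :
    HasFDerivAt (fun y => f (y, v))
      ((fderiv ℝ f (x, v)).comp (ContinuousLinearMap.inl ℝ E F)) x :=
  hf.hasFDerivAt.comp x (hasFDerivAt_prodMk_left x v)

lemma partial_snd {f : E × F → G} {x : E} {v : F} (hf : DifferentiableAt ℝ f (x, v)) :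
    HasFDerivAt (fun w => f (x, w))
      ((fderiv ℝ f (x, v)).comp (ContinuousLinearMap.inr ℝ E F)) v :=
  hf.hasFDerivAt.comp v (hasFDerivAt_prodMk_right x v)

lemma line_hasDerivAt (x v : E) (r : ℝ) : HasDerivAt (fun r' : ℝ => x + r' • v) v r := by
  simpa using ((hasDerivAt_id r).smul_const v).const_add x

end helpers

lemma flow_deriv_swap {E : Type*} [NormedAddCommGroup E] [NormedSpace ℝ E] [CompleteSpace E]
    (ξ : E → E) (hξ : ContDiff ℝ 1 ξ)
    (φ : ℝ → E → E)
    (hφreg : ContDiff ℝ 1 (fun p : ℝ × E => φ p.1 p.2))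
    (hφx : ∀ s : ℝ, Differentiable ℝ (φ s))
    (hflow : ∀ (s : ℝ) (x : E), HasDerivAt (fun u => φ u x) (ξ (φ s x)) s)
    (hφ0 : ∀ x, φ 0 x = x) (x v : E) :
    HasDerivAt (fun s => fderiv ℝ (φ s) x v) (fderiv ℝ ξ x v) 0 := by
  set Φ : ℝ × E → E := fun p => φ p.1 p.2 with hΦdef
  have hΦdiff : Differentiable ℝ Φ := hφreg.differentiable one_ne_zero
  have hpart : ∀ (s : ℝ) (y : E), HasFDerivAt (φ s)
      ((fderiv ℝ Φ (s, y)).comp (ContinuousLinearMap.inr ℝ ℝ E)) y :=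
    fun s y => partial_snd (hΦdiff (s, y))
  have hA : ∀ (s : ℝ) (y : E), fderiv ℝ (φ s) y v = fderiv ℝ Φ (s, y) (0, v) := by
    intro s y
    rw [(hpart s y).fderiv]
    rfl
  have hfderivΦcont : Continuous (fun p : ℝ × E => fderiv ℝ Φ p) :=
    hφreg.continuous_fderiv one_ne_zero
  have hAcont : Continuous (fun p : ℝ × E => fderiv ℝ Φ p (0, v)) :=
    hfderivΦcont.clm_apply continuous_const
  set g : ℝ → E := fun u => fderiv ℝ ξ (φ u x) (fderiv ℝ (φ u) x v) with hgdef
  have hφux : ∀ y : E, Continuous fun u : ℝ => φ u y := fun y =>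
    hφreg.continuous.comp (continuous_id.prodMk continuous_const)
  have hAx : Continuous fun u : ℝ => fderiv ℝ (φ u) x v := by
    simp only [hA]
    exact hAcont.comp (continuous_id.prodMk continuous_const)
  have hgcont : Continuous g :=
    (((hξ.continuous_fderiv one_ne_zero).comp (hφux x)).clm_apply hAx)
  -- integral representation of the flow
  have hrep : ∀ (s : ℝ) (y : E), φ s y = y + ∫ u in (0:ℝ)..s, ξ (φ u y) := by
    intro s y
    have hc : Continuous fun u => ξ (φ u y) := hξ.continuous.comp (hφux y)
    have h := intervalIntegral.integral_eq_sub_of_hasDerivAt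
      (f := fun u => φ u y) (f' := fun u => ξ (φ u y))
      (fun u _ => hflow u y) (hc.intervalIntegrable 0 s)
    rw [h]
    show φ s y = y + (φ s y - φ 0 y)
    rw [hφ0]
    abel
  -- the variational integral equation
  have hkey : ∀ s : ℝ, fderiv ℝ (φ s) x v = v + ∫ u in (0:ℝ)..s, g u := by
    intro s
    set F : ℝ → ℝ → E := fun r u => ξ (φ u (x + r • v)) with hFdef
    set F' : ℝ → ℝ → E := fun r u =>
      fderiv ℝ ξ (φ u (x + r • v)) (fderiv ℝ (φ u) (x + r • v) v) with hF'def
    have hxrv : Continuous fun p : ℝ × ℝ => x + p.1 • v :=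
      (continuous_const.add ((continuous_fst).smul continuous_const))
    have hφc : Continuous fun p : ℝ × ℝ => φ p.2 (x + p.1 • v) :=
      hφreg.continuous.comp (continuous_snd.prodMk hxrv)
    have hF'cont : Continuous (fun p : ℝ × ℝ => F' p.1 p.2) := by
      simp only [hF'def, hA]
      exact ((hξ.continuous_fderiv one_ne_zero).comp hφc).clm_apply
        (hAcont.comp (continuous_snd.prodMk hxrv))
    obtain ⟨C, hC⟩ : ∃ C, ∀ p ∈ (closedBall (0:ℝ) 1 ×ˢ uIcc (0:ℝ) s),
        ‖F' p.1 p.2‖ ≤ C :=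
      ((isCompact_closedBall _ _).prod isCompact_uIcc).exists_bound_of_continuousOn
        hF'cont.continuousOn
    have hFcont : ∀ r : ℝ, Continuous (F r) := fun r =>
      hξ.continuous.comp (hφux (x + r • v))
    have h_diff : ∀ u : ℝ, ∀ r : ℝ, HasDerivAt (fun r' => F r' u) (F' r u) r := by
      intro u r
      have h1 : HasDerivAt (fun r' : ℝ => φ u (x + r' • v))
          (fderiv ℝ (φ u) (x + r • v) v) r :=
        (hφx u (x + r • v)).hasFDerivAt.comp_hasDerivAt r (line_hasDerivAt x v r)
      exact ((hξ.differentiable one_ne_zero) _).hasFDerivAt.comp_hasDerivAt r h1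
    have hdom := intervalIntegral.hasDerivAt_integral_of_dominated_loc_of_deriv_le
      (F := F) (F' := F') (x₀ := (0:ℝ)) (a := 0) (b := s) (bound := fun _ => C)
      (μ := volume) (ball_mem_nhds 0 one_pos)
      (Filter.Eventually.of_forall fun r => ((hFcont r).aestronglyMeasurable))
      ((hFcont 0).intervalIntegrable 0 s)
      ((hF'cont.comp (continuous_const.prodMk continuous_id)).aestronglyMeasurable)
      (Filter.Eventually.of_forall fun u hu r hr =>
        hC (r, u) ⟨ball_subset_closedBall hr, uIoc_subset_uIcc hu⟩)
      intervalIntegrable_const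
      (Filter.Eventually.of_forall fun u _ r _ => h_diff u r)
    have hL : HasDerivAt (fun r : ℝ => φ s (x + r • v)) (fderiv ℝ (φ s) x v) 0 := by
      have := (hφx s (x + (0:ℝ) • v)).hasFDerivAt.comp_hasDerivAt 0 (line_hasDerivAt x v 0)
      simpa [Function.comp_def] using this
    have hR : HasDerivAt (fun r : ℝ => φ s (x + r • v))
        (v + ∫ u in (0:ℝ)..s, F' 0 u) 0 := by
      have heq : (fun r : ℝ => φ s (x + r • v))
          = fun r : ℝ => (x + r • v) + ∫ u in (0:ℝ)..s, F r u := by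
        funext r; exact hrep s (x + r • v)
      rw [heq]
      exact (line_hasDerivAt x v 0).add hdom.2
    have huniq := hL.unique hR
    have hF'0 : ∀ u : ℝ, F' 0 u = g u := by
      intro u; simp [hF'def, hgdef]
    rw [huniq]
    congr 1
    exact intervalIntegral.integral_congr fun u _ => hF'0 u
  have hAfun : (fun s : ℝ => fderiv ℝ (φ s) x v)
      = fun s : ℝ => v + ∫ u in (0:ℝ)..s, g u := funext hkey
  have h0 : g 0 = fderiv ℝ ξ x v := by
    have hid : φ 0 = id := funext hφ0
    simp [hgdef, hid, fderiv_id]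
  have hFTC : HasDerivAt (fun s : ℝ => v + ∫ u in (0:ℝ)..s, g u) (g 0) 0 :=
    (intervalIntegral.integral_hasDerivAt_right (hgcont.intervalIntegrable 0 0)
      (hgcont.stronglyMeasurableAtFilter _ _) hgcont.continuousAt).const_add v
  rw [hAfun, ← h0]
  exact hFTC

lemma noether_identity {E : Type*} [NormedAddCommGroup E] [NormedSpace ℝ E] [CompleteSpace E]
    (L : E → E → ℝ) (hL : ContDiff ℝ 2 (fun p : E × E => L p.1 p.2))
    (ξ : E → E) (hξ : ContDiff ℝ 1 ξ)
    (φ : ℝ → E → E)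
    (hφreg : ContDiff ℝ 1 (fun p : ℝ × E => φ p.1 p.2))
    (hφx : ∀ s : ℝ, Differentiable ℝ (φ s))
    (hflow : ∀ (s : ℝ) (x : E), HasDerivAt (fun u => φ u x) (ξ (φ s x)) s)
    (hφ0 : ∀ x, φ 0 x = x)
    (hsym : ∀ (s : ℝ) (x v : E), L (φ s x) (fderiv ℝ (φ s) x v) = L x v)
    (x v : E) :
    fderiv ℝ (fun y => L y v) x (ξ x) + fderiv ℝ (L x) v (fderiv ℝ ξ x v) = 0 := by
  set Lp : E × E → ℝ := fun p => L p.1 p.2 with hLpdef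
  have hLd : Differentiable ℝ Lp := hL.differentiable two_ne_zero
  have hA0 : fderiv ℝ (φ 0) x v = v := by
    have hid : φ 0 = id := funext hφ0
    simp [hid]
  have hpt : ((φ 0 x, fderiv ℝ (φ 0) x v) : E × E) = (x, v) := by
    rw [hφ0, hA0]
  have hc1 : HasDerivAt (fun s => φ s x) (ξ x) 0 := by
    simpa [hφ0] using hflow 0 x
  have hc2 : HasDerivAt (fun s => fderiv ℝ (φ s) x v) (fderiv ℝ ξ x v) 0 :=
    flow_deriv_swap ξ hξ φ hφreg hφx hflow hφ0 x v
  have hc : HasDerivAt (fun s => ((φ s x, fderiv ℝ (φ s) x v) : E × E))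
      (ξ x, fderiv ℝ ξ x v) 0 := hc1.prodMk hc2
  have hf' : HasFDerivAt Lp (fderiv ℝ Lp (x, v)) (φ 0 x, fderiv ℝ (φ 0) x v) := by
    rw [hpt]; exact (hLd (x, v)).hasFDerivAt
  have hK : HasDerivAt (fun s => Lp (φ s x, fderiv ℝ (φ s) x v))
      (fderiv ℝ Lp (x, v) (ξ x, fderiv ℝ ξ x v)) 0 :=
    by have := hf'.comp_hasDerivAt 0 hc; exact this
  have hKconst : (fun s => Lp (φ s x, fderiv ℝ (φ s) x v)) = fun _ => L x v :=
    funext fun s => hsym s x v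
  have hzero : fderiv ℝ Lp (x, v) (ξ x, fderiv ℝ ξ x v) = 0 := by
    refine hK.unique ?_
    rw [hKconst]
    exact hasDerivAt_const 0 _
  have hfst : fderiv ℝ (fun y => L y v) x (ξ x) = fderiv ℝ Lp (x, v) (ξ x, 0) := by
    have := (partial_fst (hLd (x, v))).fderiv
    calc fderiv ℝ (fun y => L y v) x (ξ x)
        = ((fderiv ℝ Lp (x, v)).comp (ContinuousLinearMap.inl ℝ E E)) (ξ x) := by rw [← this]
      _ = fderiv ℝ Lp (x, v) (ξ x, 0) := rfl
  have hsnd : fderiv ℝ (L x) v (fderiv ℝ ξ x v)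
      = fderiv ℝ Lp (x, v) (0, fderiv ℝ ξ x v) := by
    have h2 : fderiv ℝ (L x) v = (fderiv ℝ Lp (x, v)).comp (ContinuousLinearMap.inr ℝ E E) :=
      (partial_snd (hLd (x, v))).fderiv
    rw [h2]; rfl
  rw [hfst, hsnd, ← map_add, ← hzero]
  congr 1
  simp


/-- **Nonholonomic Noether theorem.**
Let `L : ℝⁿ × ℝⁿ → ℝ` be a C² Lagrangian, `H` a constraint distribution assigning to each
`q ∈ ℝⁿ` a linear subspace of ℝⁿ, and `q : ℝ → ℝⁿ` a C² curve satisfying the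
Lagrange–d'Alembert conditions: the velocity lies in `H (q t)` and the Euler–Lagrange
covector `(d/dt)[D₂L(q, q̇)] − D₁L(q, q̇)` annihilates `H (q t)` for all `t`.
If `ξ` is a C¹ vector field with global flow `φ` (C¹ in `(s,x)`, differentiable in `x`)
whose flow preserves `L` (acting on velocities via the tangent map), and `ξ x ∈ H x`
for all `x`, then `t ↦ D₂L(q t, q̇ t)·ξ(q t)` is constant. -/
theorem nonholonomic_noether
    (n : ℕ)
    (L : (Fin n → ℝ) → (Fin n → ℝ) → ℝ)
    (hL : ContDiff ℝ 2 (fun p : (Fin n → ℝ) × (Fin n → ℝ) => L p.1 p.2))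
    (H : (Fin n → ℝ) → Submodule ℝ (Fin n → ℝ))
    (q : ℝ → (Fin n → ℝ)) (hq : ContDiff ℝ 2 q)
    -- the curve is horizontal
    (hhor : ∀ t : ℝ, deriv q t ∈ H (q t))
    -- Lagrange–d'Alembert: the Euler–Lagrange covector annihilates H(q t)
    (hLdA : ∀ t : ℝ, ∀ h ∈ H (q t),
      deriv (fun s => fderiv ℝ (L (q s)) (deriv q s) h) t
        = fderiv ℝ (fun x => L x (deriv q t)) (q t) h)
    -- the symmetry vector field and its global flow
    (ξ : (Fin n → ℝ) → (Fin n → ℝ)) (hξ : ContDiff ℝ 1 ξ)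
    (φ : ℝ → (Fin n → ℝ) → (Fin n → ℝ))
    (hφreg : ContDiff ℝ 1 (fun p : ℝ × (Fin n → ℝ) => φ p.1 p.2))
    (hφx : ∀ s : ℝ, Differentiable ℝ (φ s))
    (hflow : ∀ (s : ℝ) (x : Fin n → ℝ), HasDerivAt (fun u => φ u x) (ξ (φ s x)) s)
    (hφ0 : ∀ x, φ 0 x = x)
    -- the flow preserves the Lagrangian
    (hsym : ∀ (s : ℝ) (x v : Fin n → ℝ), L (φ s x) (fderiv ℝ (φ s) x v) = L x v)
    -- ξ takes values in the constraint distribution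
    (hξH : ∀ x, ξ x ∈ H x) :
    ∀ t₁ t₂ : ℝ,
      fderiv ℝ (L (q t₁)) (deriv q t₁) (ξ (q t₁))
        = fderiv ℝ (L (q t₂)) (deriv q t₂) (ξ (q t₂)) := by
  intro t₁ t₂
  set Lp : (Fin n → ℝ) × (Fin n → ℝ) → ℝ := fun p => L p.1 p.2 with hLpdef
  have hLd : Differentiable ℝ Lp := hL.differentiable two_ne_zero
  set P : ((Fin n → ℝ) × (Fin n → ℝ)) → ((Fin n → ℝ) →L[ℝ] ℝ) :=
    fun p => (fderiv ℝ Lp p).comp (ContinuousLinearMap.inr ℝ _ _) with hPdef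
  have hPc : ContDiff ℝ 1 P := by
    have h1 : ContDiff ℝ 1 (fderiv ℝ Lp) := hL.fderiv_right (by norm_num)
    exact (((ContinuousLinearMap.compL ℝ (Fin n → ℝ) ((Fin n → ℝ) × (Fin n → ℝ)) ℝ).flip
      (ContinuousLinearMap.inr ℝ _ _)).contDiff).comp h1
  have hPeq : ∀ x v, fderiv ℝ (L x) v = P (x, v) := fun x v =>
    (partial_snd (hLd (x, v))).fderiv
  have hqd : ∀ t, HasDerivAt q (deriv q t) t := fun t =>
    ((hq.differentiable two_ne_zero) t).hasDerivAt
  have hv1 : ContDiff ℝ 1 (deriv q) := by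
    have h := (hq.fderiv_right (m := 1) (by norm_num)).clm_apply
      (contDiff_const (c := (1:ℝ)))
    simpa only [fderiv_apply_one_eq_deriv] using h
  set p : ℝ → ((Fin n → ℝ) →L[ℝ] ℝ) := fun t => P (q t, deriv q t) with hpdef
  have hpc : ContDiff ℝ 1 p := hPc.comp ((hq.of_le one_le_two).prodMk hv1)
  have hpd : Differentiable ℝ p := hpc.differentiable one_ne_zero
  have hw : ∀ t, HasDerivAt (fun t => ξ (q t)) (fderiv ℝ ξ (q t) (deriv q t)) t :=
    fun t => ((hξ.differentiable one_ne_zero) (q t)).hasFDerivAt.comp_hasDerivAt t (hqd t)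
  set f : ℝ → ℝ := fun t => p t (ξ (q t)) with hfdef
  have hfder : ∀ t, HasDerivAt f
      (deriv p t (ξ (q t)) + p t (fderiv ℝ ξ (q t) (deriv q t))) t :=
    fun t => ((hpd t).hasDerivAt.clm_apply (hw t))
  have h1 : ∀ t, deriv p t (ξ (q t))
      = fderiv ℝ (fun x => L x (deriv q t)) (q t) (ξ (q t)) := by
    intro t
    have happ : HasDerivAt (fun s => p s (ξ (q t))) (deriv p t (ξ (q t))) t := by
      simpa using ((hpd t).hasDerivAt.clm_apply (hasDerivAt_const t (ξ (q t))))
    have hld := hLdA t (ξ (q t)) (hξH (q t))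
    rw [show (fun s => fderiv ℝ (L (q s)) (deriv q s) (ξ (q t)))
        = fun s => p s (ξ (q t)) from funext fun s => by rw [hPeq]] at hld
    rw [← hld, happ.deriv]
  have hNI : ∀ t, fderiv ℝ (fun x => L x (deriv q t)) (q t) (ξ (q t))
      + p t (fderiv ℝ ξ (q t) (deriv q t)) = 0 := by
    intro t
    have h := noether_identity L hL ξ hξ φ hφreg hφx hflow hφ0 hsym (q t) (deriv q t)
    rwa [hPeq] at h
  have hf0 : ∀ t, HasDerivAt f 0 t := by
    intro t
    have h := hfder t
    rw [h1 t, hNI t] at h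
    exact h
  have hconst := is_const_of_deriv_eq_zero (𝕜 := ℝ)
    (fun t => (hf0 t).differentiableAt) (fun t => (hf0 t).deriv) t₁ t₂
  rw [hPeq, hPeq]
  exact hconst
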